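/- Let S' be a finite set of independent Bernoulli-type nonnegative random variables X_i (taking value p_i with probability π_i and 0 otherwise) with Σ_i π_i ≤ k and k > 1/ε⁴ where 0 < ε ≤ 1/2 and 1/ε is an integer. Let u_m(S') = u(sum of the m largest realized values) for u concave nondecreasing with u(0)=0. Then (1+ε)·E[u_k(S')] ≥ E[u_{k(1+ε)}(S')]. -/

import Mathlib

open Finset MeasureTheory ProbabilityTheory

/-- Sum of the `m` largest coordinates of a nonnegative vector `x : Fin n → ℝ`. -/
noncomputable def sumTopK (n m : ℕ) (x : Fin n → ℝ) : ℝ :=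
  ((Finset.univ.powerset.filter (fun s : Finset (Fin n) => s.card ≤ m)).sup'
    ⟨∅, by simp⟩ (fun s => ∑ i ∈ s, x i))

lemma exists_top_subset {α : Type*} [DecidableEq α] (x : α → ℝ) :
    ∀ (k : ℕ) (s : Finset α), k ≤ s.card →
      ∃ t ⊆ s, t.card = k ∧ ∀ i ∈ s \ t, ∀ j ∈ t, x i ≤ x j := by
  intro k
  induction k with
  | zero => intro s _; exact ⟨∅, empty_subset _, rfl, by simp⟩
  | succ k ih =>
      intro s hs
      obtain ⟨t, hts, hcard, htop⟩ := ih s (Nat.le_of_succ_le hs)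
      have hne : (s \ t).Nonempty := by
        rw [← Finset.card_pos, Finset.card_sdiff_of_subset hts, hcard]
        omega
      obtain ⟨j, hj, hjmax⟩ := Finset.exists_max_image (s \ t) x hne
      refine ⟨insert j t, ?_, ?_, ?_⟩
      · exact Finset.insert_subset (Finset.mem_sdiff.mp hj).1 hts
      · rw [Finset.card_insert_of_notMem (Finset.mem_sdiff.mp hj).2, hcard]
      · intro i hi j' hj'
        have hi' : i ∈ s \ t := by
          rcases Finset.mem_sdiff.mp hi with ⟨h1, h2⟩
          exact Finset.mem_sdiff.mpr ⟨h1, fun h => h2 (Finset.mem_insert_of_mem h)⟩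
        rcases Finset.mem_insert.mp hj' with rfl | h
        · exact hjmax i hi'
        · exact htop i hi' j' h

lemma sumTopK_mem_le {n m : ℕ} (x : Fin n → ℝ) {s : Finset (Fin n)} (hs : s.card ≤ m) :
    ∑ i ∈ s, x i ≤ sumTopK n m x := by
  refine Finset.le_sup' (f := fun s => ∑ i ∈ s, x i) ?_
  simp [hs]

lemma sumTopK_nonneg {n m : ℕ} (x : Fin n → ℝ) : 0 ≤ sumTopK n m x := by
  simpa using sumTopK_mem_le x (s := ∅) (m := m) (by simp)

lemma sumTopK_le_of_le {n m : ℕ} {x : Fin n → ℝ} {C : ℝ} (hC : 0 ≤ C)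
    (h : ∀ s : Finset (Fin n), s.card ≤ m → ∑ i ∈ s, x i ≤ C) :
    sumTopK n m x ≤ C := by
  apply Finset.sup'_le
  intro s hs
  simp only [Finset.mem_filter, Finset.mem_powerset] at hs
  exact h s hs.2

lemma sumTopK_relax {n k k' : ℕ} {ε : ℝ} (hε : 0 < ε) (hk1 : 1 ≤ k)
    (hk' : (k' : ℝ) = (k : ℝ) * (1 + ε)) (x : Fin n → ℝ) (hx : ∀ i, 0 ≤ x i) :
    sumTopK n k' x ≤ (1 + ε) * sumTopK n k x := by
  have hM : 0 ≤ sumTopK n k x := sumTopK_nonneg x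
  apply sumTopK_le_of_le (by nlinarith)
  intro s hs
  by_cases hcase : s.card ≤ k
  · have := sumTopK_mem_le x hcase
    nlinarith
  · push_neg at hcase
    obtain ⟨t, hts, hcard, htop⟩ := exists_top_subset x k s hcase.le
    have hT : ∑ i ∈ t, x i ≤ sumTopK n k x := sumTopK_mem_le x (by rw [hcard])
    have hT0 : 0 ≤ ∑ i ∈ t, x i := Finset.sum_nonneg fun i _ => hx i
    -- each element of s \ t satisfies k * x i ≤ ∑_t x
    have hD : (k : ℝ) * ∑ i ∈ s \ t, x i ≤ ((s.card : ℝ) - k) * ∑ i ∈ t, x i := by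
      have h1 : ∀ i ∈ s \ t, (k : ℝ) * x i ≤ ∑ j ∈ t, x j := by
        intro i hi
        calc (k : ℝ) * x i = ∑ _j ∈ t, x i := by rw [Finset.sum_const, hcard]; ring
        _ ≤ ∑ j ∈ t, x j := Finset.sum_le_sum fun j hj => htop i hi j hj
      calc (k : ℝ) * ∑ i ∈ s \ t, x i = ∑ i ∈ s \ t, (k : ℝ) * x i := Finset.mul_sum _ _ _
      _ ≤ ∑ _i ∈ s \ t, ∑ j ∈ t, x j := Finset.sum_le_sum h1
      _ = ((s.card : ℝ) - k) * ∑ j ∈ t, x j := by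
          rw [Finset.sum_const, Finset.card_sdiff_of_subset hts, hcard]
          have : (k:ℕ) ≤ s.card := hcase.le
          rw [nsmul_eq_mul, Nat.cast_sub this]
    have hsplit : ∑ i ∈ s \ t, x i + ∑ i ∈ t, x i = ∑ i ∈ s, x i :=
      Finset.sum_sdiff hts
    have hm : (s.card : ℝ) ≤ (k : ℝ) * (1 + ε) := by
      rw [← hk']; exact_mod_cast hs
    have hkpos : (0:ℝ) < k := by exact_mod_cast hk1
    nlinarith [Finset.sum_nonneg (fun i (_ : i ∈ s \ t) => hx i)]

lemma measurable_sumTopK {Ω : Type*} [MeasurableSpace Ω] {n m : ℕ}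
    (X : Fin n → Ω → ℝ) (hmeas : ∀ i, Measurable (X i)) :
    Measurable (fun ω => sumTopK n m (fun i => X i ω)) := by
  unfold sumTopK
  have : (fun ω => ((Finset.univ.powerset.filter
      (fun s : Finset (Fin n) => s.card ≤ m)).sup'
      ⟨∅, by simp⟩ (fun s => ∑ i ∈ s, X i ω)))
      = ((Finset.univ.powerset.filter (fun s : Finset (Fin n) => s.card ≤ m)).sup'
      ⟨∅, by simp⟩ (fun s ω => ∑ i ∈ s, X i ω)) := by
    ext ω
    exact (Finset.sup'_apply (C := fun _ : Ω => ℝ) _ (fun s ω => ∑ i ∈ s, X i ω) ω).symm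
  rw [this]
  exact Finset.measurable_sup' _ (fun s _ => Finset.measurable_sum _ (fun i _ => hmeas i))

/-- **Relaxing the inventory constraint for large `k`.**
Let `S' = {X₁,…,Xₙ}` be independent two-valued random variables (`X i = p i > 0`
with probability `π i`, else `0`) with `∑ π i ≤ k` and `k > 1/ε⁴`, where
`0 < ε ≤ 1/2` and `1/ε` is an integer.  Let `u_m(S') = u` applied to the sum of
the `m` largest realized values, for `u` nondecreasing concave with `u 0 = 0`.
Then `(1+ε) E[u_k(S')] ≥ E[u_{k(1+ε)}(S')]`, where `k(1+ε)` is an integer `k'`. -/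
theorem relax_inventory_large_k
    {Ω : Type*} [MeasureSpace Ω] [IsProbabilityMeasure (ℙ : Measure Ω)]
    (u : ℝ → ℝ) (hconc : ConcaveOn ℝ (Set.Ici (0 : ℝ)) u) (hmono : Monotone u)
    (h0 : u 0 = 0) (n k k' : ℕ) (ε : ℝ)
    (hε : 0 < ε) (hε2 : ε ≤ 1 / 2) (hεint : ∃ m : ℕ, (m : ℝ) * ε = 1)
    (hk : (k : ℝ) > 1 / ε ^ 4) (hk' : (k' : ℝ) = (k : ℝ) * (1 + ε))
    (p π : Fin n → ℝ) (X : Fin n → Ω → ℝ)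
    (hp : ∀ i, 0 < p i) (hmeas : ∀ i, Measurable (X i))
    (hval : ∀ i ω, X i ω = p i ∨ X i ω = 0)
    (hprob : ∀ i, ℙ {ω | X i ω = p i} = ENNReal.ofReal (π i))
    (hπsum : ∑ i, π i ≤ (k : ℝ))
    (hind : iIndepFun X ℙ) :
    ∫ ω, u (sumTopK n k' (fun i => X i ω))
      ≤ (1 + ε) * ∫ ω, u (sumTopK n k (fun i => X i ω)) := by
  -- k ≥ 1
  have hk1 : 1 ≤ k := by
    by_contra h
    push_neg at h
    interval_cases k
    have h1 : (0:ℝ) < 1 / ε ^ 4 := by positivity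
    simp only [Nat.cast_zero] at hk
    nlinarith [pow_pos hε 4]
  -- bounds on X
  have hX0 : ∀ i ω, 0 ≤ X i ω := by
    intro i ω; rcases hval i ω with h | h <;> rw [h] <;> first | exact (hp i).le | exact le_refl 0
  have hXp : ∀ i ω, X i ω ≤ p i := by
    intro i ω; rcases hval i ω with h | h <;> rw [h]
    exact (hp i).le
  -- the scaling property of u
  have hscale : ∀ t : ℝ, 0 ≤ t → u ((1 + ε) * t) ≤ (1 + ε) * u t := by
    intro t ht
    have h1 : (1 + ε) * t ∈ Set.Ici (0:ℝ) := by
      simp only [Set.mem_Ici]; nlinarith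
    have h2 : (0:ℝ) ∈ Set.Ici (0:ℝ) := by simp
    have ha : (0:ℝ) ≤ 1 / (1 + ε) := by positivity
    have hb : (0:ℝ) ≤ ε / (1 + ε) := by positivity
    have hab : 1 / (1 + ε) + ε / (1 + ε) = 1 := by field_simp
    have := hconc.2 h1 h2 ha hb hab
    simp only [smul_eq_mul, mul_zero, h0, add_zero] at this
    have heq : 1 / (1 + ε) * ((1 + ε) * t) = t := by field_simp
    rw [heq] at this
    have h3 : (0:ℝ) < 1 + ε := by linarith
    rw [one_div, inv_mul_le_iff₀ h3] at this
    linarith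
  -- pointwise bound
  have hpoint : ∀ ω, u (sumTopK n k' (fun i => X i ω))
      ≤ (1 + ε) * u (sumTopK n k (fun i => X i ω)) := by
    intro ω
    have h1 : sumTopK n k' (fun i => X i ω) ≤ (1 + ε) * sumTopK n k (fun i => X i ω) :=
      sumTopK_relax hε hk1 hk' _ (fun i => hX0 i ω)
    calc u (sumTopK n k' (fun i => X i ω))
        ≤ u ((1 + ε) * sumTopK n k (fun i => X i ω)) := hmono h1
      _ ≤ (1 + ε) * u (sumTopK n k (fun i => X i ω)) :=
          hscale _ (sumTopK_nonneg _)
  -- integrability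
  have humeas : Measurable u := hmono.measurable
  have key : ∀ m : ℕ, Integrable (fun ω => u (sumTopK n m (fun i => X i ω))) ℙ := by
    intro m
    have hmeas' : Measurable (fun ω => u (sumTopK n m (fun i => X i ω))) :=
      humeas.comp (measurable_sumTopK X hmeas)
    refine ⟨hmeas'.aestronglyMeasurable, ?_⟩
    apply HasFiniteIntegral.of_bounded (C := |u (∑ i, p i)|)
    filter_upwards with ω
    have hle : sumTopK n m (fun i => X i ω) ≤ ∑ i, p i := by
      apply sumTopK_le_of_le (Finset.sum_nonneg fun i _ => (hp i).le)
      intro s _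
      calc ∑ i ∈ s, X i ω ≤ ∑ i ∈ s, p i := Finset.sum_le_sum fun i _ => hXp i ω
        _ ≤ ∑ i, p i := Finset.sum_le_sum_of_subset_of_nonneg (Finset.subset_univ s)
            (fun i _ _ => (hp i).le)
    have h1 : 0 ≤ u (sumTopK n m (fun i => X i ω)) := by
      rw [← h0]; exact hmono (sumTopK_nonneg _)
    have h2 : u (sumTopK n m (fun i => X i ω)) ≤ u (∑ i, p i) := hmono hle
    rw [Real.norm_eq_abs, abs_of_nonneg h1]
    exact h2.trans (le_abs_self _)
  calc ∫ ω, u (sumTopK n k' (fun i => X i ω))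
      ≤ ∫ ω, (1 + ε) * u (sumTopK n k (fun i => X i ω)) :=
        integral_mono (key k') ((key k).const_mul _) hpoint
    _ = (1 + ε) * ∫ ω, u (sumTopK n k (fun i => X i ω)) :=
        integral_const_mul _ _
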